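/- Let N ≥ 2 be an integer, q ∈ ℝ with q > 0 and q ≠ 1, and α, β ∈ ℝ with α ≠ 0 and α + 𝔰β ≠ 0. Then the set S = { (λ₁,…,λ₆) ∈ ℝ⁶ : Qλ₃ = Qλ₄ = qλ₅ − (Q² + 1)λ₆ + Q and λ₂α − λ₃(α + 𝔰β) − λ₅β − q⁻¹λ₆β = 0 } is an affine subspace of ℝ⁶ of dimension 3. In particular, for the alternative notion of compatibility of a connection with a metric introduced in Appendix B, the Levi-Civita connections on Γ_{±,z} over SU_q(N) with real coefficients form a three-parameter family and are not unique. -/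

import Mathlib

open scoped BigOperators

namespace Stmt11

/-- `𝔰 = Σ_{i=1}^{N} q^{−2i}` (real). -/
noncomputable def sconst (N : ℕ) (q : ℝ) : ℝ := ∑ i : Fin N, q ^ (-(2 * ((i.1 : ℤ) + 1)))

set_option maxHeartbeats 1000000 in
/-- For the alternative compatibility notion of Appendix B, the set of coefficient tuples
`(λ₁,…,λ₆) ∈ ℝ⁶` of Levi-Civita connections on `Γ_{±,z}` over `SU_q(N)`—i.e. the solutions
of the torsion equations `Qλ₃ = Qλ₄ = qλ₅ − (Q² + 1)λ₆ + Q` together with the single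
metric-compatibility equation `λ₂α − λ₃(α + 𝔰β) − λ₅β − q⁻¹λ₆β = 0`—is an affine subspace
of `ℝ⁶` of dimension 3.  (Here `Q = q − q⁻¹` and `l 0 = λ₁, …, l 5 = λ₆`.) -/
theorem appendixB_levi_civita_three_parameters (N : ℕ) (hN : 2 ≤ N)
    (q : ℝ) (hq0 : 0 < q) (hq1 : q ≠ 1) (α β : ℝ) (hα : α ≠ 0)
    (hαβ : α + sconst N q * β ≠ 0) :
    ∃ A : AffineSubspace ℝ (Fin 6 → ℝ),
      (A : Set (Fin 6 → ℝ)) =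
        {l : Fin 6 → ℝ |
          (q - q⁻¹) * l 2 = (q - q⁻¹) * l 3 ∧
          (q - q⁻¹) * l 3 = q * l 4 - ((q - q⁻¹) ^ 2 + 1) * l 5 + (q - q⁻¹) ∧
          l 1 * α - l 2 * (α + sconst N q * β) - l 4 * β - q⁻¹ * l 5 * β = 0} ∧
      Module.finrank ℝ A.direction = 3 := by
  have hq : q ≠ 0 := ne_of_gt hq0
  set s : ℝ := sconst N q with hs
  have hQ : q - q⁻¹ ≠ 0 := by
    intro h
    have h1 : q * q = 1 := by
      have h0 := sub_eq_zero.mp h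
      field_simp at h0
      linarith [h0]
    have h2 : (q - 1) * (q + 1) = 0 := by nlinarith
    rcases mul_eq_zero.mp h2 with h' | h'
    · exact hq1 (by linarith)
    · nlinarith
  let f : (Fin 6 → ℝ) →ₗ[ℝ] ℝ × ℝ × ℝ :=
  { toFun := fun l => ((q - q⁻¹) * l 2 - (q - q⁻¹) * l 3,
      (q - q⁻¹) * l 3 - q * l 4 + ((q - q⁻¹) ^ 2 + 1) * l 5,
      l 1 * α - l 2 * (α + s * β) - l 4 * β - q⁻¹ * l 5 * β)
    map_add' := by
      intro x y
      simp only [Pi.add_apply, Prod.mk_add_mk, Prod.mk.injEq]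
      refine ⟨by ring, by ring, by ring⟩
    map_smul' := by
      intro c x
      simp only [Pi.smul_apply, smul_eq_mul, RingHom.id_apply, Prod.smul_mk, Prod.mk.injEq]
      refine ⟨by ring, by ring, by ring⟩ }
  have hf : ∀ l : Fin 6 → ℝ, f l = ((q - q⁻¹) * l 2 - (q - q⁻¹) * l 3,
      (q - q⁻¹) * l 3 - q * l 4 + ((q - q⁻¹) ^ 2 + 1) * l 5,
      l 1 * α - l 2 * (α + s * β) - l 4 * β - q⁻¹ * l 5 * β) := fun l => rfl
  have hq2 : q * q - 1 ≠ 0 := by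
    intro h
    apply hQ
    field_simp
    linarith
  have hfsurj : Function.Surjective f := by
    rintro ⟨a, b, c⟩
    refine ⟨![0, (c + (a / (q - q⁻¹)) * (α + s * β) + (-b / q) * β) / α,
      a / (q - q⁻¹), 0, -b / q, 0], ?_⟩
    rw [hf]
    have e1 : (![0, (c + (a / (q - q⁻¹)) * (α + s * β) + (-b / q) * β) / α,
      a / (q - q⁻¹), 0, -b / q, 0] : Fin 6 → ℝ) 1
        = (c + (a / (q - q⁻¹)) * (α + s * β) + (-b / q) * β) / α := rfl
    have e2 : (![0, (c + (a / (q - q⁻¹)) * (α + s * β) + (-b / q) * β) / α,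
      a / (q - q⁻¹), 0, -b / q, 0] : Fin 6 → ℝ) 2 = a / (q - q⁻¹) := rfl
    have e3 : (![0, (c + (a / (q - q⁻¹)) * (α + s * β) + (-b / q) * β) / α,
      a / (q - q⁻¹), 0, -b / q, 0] : Fin 6 → ℝ) 3 = 0 := rfl
    have e4 : (![0, (c + (a / (q - q⁻¹)) * (α + s * β) + (-b / q) * β) / α,
      a / (q - q⁻¹), 0, -b / q, 0] : Fin 6 → ℝ) 4 = -b / q := rfl
    have e5 : (![0, (c + (a / (q - q⁻¹)) * (α + s * β) + (-b / q) * β) / α,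
      a / (q - q⁻¹), 0, -b / q, 0] : Fin 6 → ℝ) 5 = 0 := rfl
    rw [e1, e2, e3, e4, e5]
    simp only [Prod.mk.injEq]
    refine ⟨by rw [mul_zero, sub_zero, mul_div_assoc', mul_div_cancel_left₀ a hQ], by field_simp; try ring, by field_simp; try ring⟩
  let p : Fin 6 → ℝ := ![0, (α + s * β) / α, 1, 1, 0, 0]
  have hp1 : p 1 = (α + s * β) / α := rfl
  have hp2 : p 2 = 1 := rfl
  have hp3 : p 3 = 1 := rfl
  have hp4 : p 4 = 0 := rfl
  have hp5 : p 5 = 0 := rfl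
  refine ⟨AffineSubspace.mk' p (LinearMap.ker f), ?_, ?_⟩
  · ext l
    simp only [AffineSubspace.mem_coe, AffineSubspace.mem_mk', LinearMap.mem_ker,
      Set.mem_setOf_eq]
    have hvs : (l -ᵥ p) = l - p := rfl
    rw [hvs, hf]
    simp only [Prod.mk_eq_zero]
    simp only [Pi.sub_apply, hp1, hp2, hp3, hp4, hp5]
    have hpc : (α + s * β) / α * α = α + s * β := div_mul_cancel₀ _ hα
    constructor
    · rintro ⟨h0, h1, h2⟩
      exact ⟨by linear_combination h0, by linear_combination h1, by linear_combination h2 + hpc⟩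
    · rintro ⟨h0, h1, h2⟩
      exact ⟨by linear_combination h0, by linear_combination h1, by linear_combination h2 - hpc⟩
  · rw [AffineSubspace.direction_mk']
    have hrn := LinearMap.finrank_range_add_finrank_ker f
    rw [LinearMap.range_eq_top.mpr hfsurj, finrank_top] at hrn
    have h6 : Module.finrank ℝ (Fin 6 → ℝ) = 6 := by
      simp [Module.finrank_pi]
    have h3 : Module.finrank ℝ (ℝ × ℝ × ℝ) = 3 := by
      simp [Module.finrank_prod]
    rw [h6, h3] at hrn
    omega

end Stmt11
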